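/- Let d ∈ {1,2,3} and let p = p(d) (p(1) = 3, p(2) = 2√2, p(3) = (1+√17)/2). Suppose u : (1,∞) → ℝ is twice differentiable, satisfies the radial equation u''(r) + ((d−1)/r)·u'(r) = u(r)² for all r > 1, satisfies u(r) ≥ 2(4−d)/r² for all r > 1, and r²·u(r) → 2(4−d) as r → ∞. Then there exist constants C > 1 and c ≥ 0 such that u(r) ≤ (2(4−d)/r²)·(1 + c·r^{2−p}) for all r ≥ C. -/

import Mathlib

set_option maxHeartbeats 1000000
open Real Filter Set Topology

lemma aux_no_max (w w1 : ℝ → ℝ) (s : Set ℝ) (hs : IsOpen s) (r₀ : ℝ) (hr₀ : r₀ ∈ s)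
    (hw : ∀ r ∈ s, HasDerivAt w (w1 r) r) (m : ℝ) (hm : 0 < m)
    (hd : HasDerivAt w1 m r₀) (h10 : w1 r₀ = 0) (hmax : IsLocalMax w r₀) : False := by
  have hslope := hasDerivAt_iff_tendsto_slope.1 hd
  have hev : ∀ᶠ y in 𝓝[>] r₀, 0 < slope w1 r₀ y :=
    ((hslope.eventually_const_lt hm).filter_mono (nhdsWithin_mono _ fun y hy => ne_of_gt hy))
  have hev2 : ∀ᶠ y in 𝓝[>] r₀, 0 < w1 y := by
    filter_upwards [hev, self_mem_nhdsWithin] with y hy hy'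
    have hy'' : 0 < y - r₀ := sub_pos.2 hy'
    rw [slope_def_field, h10, sub_zero] at hy
    have := mul_pos hy hy''
    rwa [div_mul_cancel₀ _ (ne_of_gt hy'')] at this
  -- also eventually in s and eventually w ≤ w r₀
  have hsev : ∀ᶠ y in 𝓝[>] r₀, y ∈ s :=
    nhdsWithin_le_nhds (hs.mem_nhds hr₀)
  have hmaxev : ∀ᶠ y in 𝓝[>] r₀, w y ≤ w r₀ := nhdsWithin_le_nhds hmax
  obtain ⟨b, hb, hsub⟩ := (mem_nhdsGT_iff_exists_Ioo_subset).1
    ((hev2.and (hsev.and hmaxev)).filter_mono le_rfl : {y | 0 < w1 y ∧ y ∈ s ∧ w y ≤ w r₀} ∈ 𝓝[>] r₀)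
  -- pick b' in (r₀, b)
  set b' := (r₀ + b) / 2 with hb'
  have hrb : r₀ < b := hb
  have h1 : r₀ < b' := by simp [hb']; linarith
  have h2 : b' < b := by simp [hb']; linarith
  have hmono : StrictMonoOn w (Icc r₀ b') := by
    apply strictMonoOn_of_deriv_pos (convex_Icc _ _)
    · intro x hx
      rcases eq_or_lt_of_le hx.1 with h | h
      · subst h
        exact (hw r₀ hr₀).continuousAt.continuousWithinAt
      · exact ((hw x (hsub ⟨h, lt_of_le_of_lt hx.2 h2⟩).2.1).continuousAt).continuousWithinAt
    · intro x hx
      rw [interior_Icc] at hx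
      have hxm : x ∈ Ioo r₀ b := ⟨hx.1, lt_trans hx.2 h2⟩
      rw [(hw x (hsub hxm).2.1).deriv]
      exact (hsub hxm).1
  have hlt : w r₀ < w b' := hmono (left_mem_Icc.2 (le_of_lt h1)) (right_mem_Icc.2 (le_of_lt h1)) h1
  have : w b' ≤ w r₀ := (hsub ⟨h1, h2⟩).2.2
  linarith

lemma aux_global (w : ℝ → ℝ) (a : ℝ) (hcont : ContinuousOn w (Ici a))
    (hwa : w a ≤ 0) (hlim : Tendsto w atTop (𝓝 0))
    (hkey : ∀ r > a, IsLocalMax w r → 0 < w r → False) :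
    ∀ r ≥ a, w r ≤ 0 := by
  by_contra hcon
  push_neg at hcon
  obtain ⟨r₀, hr₀a, hr₀⟩ := hcon
  have hev : ∀ᶠ r in atTop, w r < w r₀ := hlim.eventually_lt_const hr₀
  obtain ⟨M, hM⟩ := hev.exists_forall_of_atTop
  set M' := max M r₀ with hM'
  have hr₀M : r₀ ≤ M' := le_max_right _ _
  have hcpt : IsCompact (Icc a M') := isCompact_Icc
  have hne : (Icc a M').Nonempty := ⟨r₀, hr₀a, hr₀M⟩
  obtain ⟨r₁, hr₁mem, hr₁max⟩ := hcpt.exists_isMaxOn hne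
    (hcont.mono (Icc_subset_Ici_self))
  have hwr₁ : w r₀ ≤ w r₁ := hr₁max ⟨hr₀a, hr₀M⟩
  have hr₁pos : 0 < w r₁ := lt_of_lt_of_le hr₀ hwr₁
  have hr₁a : a < r₁ := by
    rcases eq_or_lt_of_le hr₁mem.1 with h | h
    · exfalso; rw [← h] at hr₁pos; linarith
    · exact h
  refine hkey r₁ hr₁a ?_ hr₁pos
  have hIoi : Ioi a ∈ 𝓝 r₁ := isOpen_Ioi.mem_nhds hr₁a
  filter_upwards [hIoi] with y hy
  by_cases hyM : y ≤ M'
  · exact hr₁max ⟨le_of_lt hy, hyM⟩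
  · push_neg at hyM
    have : w y < w r₀ := hM y (le_trans (le_max_left _ _) (le_of_lt hyM))
    linarith

lemma aux_iden (dd LL A c0 r U U1 U2 X Y Z : ℝ)
    (hY : Y * r = X) (hZ : Z * r^2 = X)
    (hU2 : r*U2 + (dd-1)*U1 = r*U^2)
    (hA8 : A = 8 - 2*dd)
    (hind : LL^2 + (dd-6)*LL + 2*dd - 8 = 0) :
    ((2*U + 4*r*U1 + r^2*U2) - c0*(LL*(LL-1)*Z)) * r^2
      = (8-2*dd)*((r^2*U - A) - c0*X) + (r^2*U - A)^2
        - (dd-5)*(r*((2*r*U + r^2*U1) - c0*(LL*Y))) := by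
  linear_combination r^3*hU2 - c0*X*hind - c0*LL*(LL-1)*hZ - (dd-5)*c0*LL*hY + (2*r^2*U - A)*hA8

theorem stmt0 (d : ℕ) (hd : d = 1 ∨ d = 2 ∨ d = 3) (p : ℝ)
    (hp : (d = 1 ∧ p = 3) ∨ (d = 2 ∧ p = 2 * Real.sqrt 2) ∨
      (d = 3 ∧ p = (1 + Real.sqrt 17) / 2))
    (u : ℝ → ℝ)
    (hdiff : ∀ r > (1 : ℝ), DifferentiableAt ℝ u r)
    (hdiff' : ∀ r > (1 : ℝ), DifferentiableAt ℝ (deriv u) r)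
    (heq : ∀ r > (1 : ℝ), deriv (deriv u) r + ((d : ℝ) - 1) / r * deriv u r = (u r) ^ 2)
    (hlb : ∀ r > (1 : ℝ), 2 * (4 - (d : ℝ)) / r ^ 2 ≤ u r)
    (hlim : Tendsto (fun r : ℝ => r ^ 2 * u r) atTop (nhds (2 * (4 - (d : ℝ))))) :
    ∃ C c : ℝ, 1 < C ∧ 0 ≤ c ∧
      ∀ r ≥ C, u r ≤ (2 * (4 - (d : ℝ)) / r ^ 2) * (1 + c * r ^ (2 - p)) := by
  set A : ℝ := 2 * (4 - (d : ℝ)) with hAdef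
  set L : ℝ := 2 - p with hLdef
  have hdR : 1 ≤ (d:ℝ) ∧ (d:ℝ) ≤ 3 := by
    rcases hd with h | h | h <;> subst h <;> norm_num
  have hA : 0 < A := by rw [hAdef]; linarith [hdR.2]
  have hA8 : A = 8 - 2*(d:ℝ) := by rw [hAdef]; ring
  have hL0 : L < 0 := by
    rw [hLdef]
    rcases hp with ⟨_, hp1⟩ | ⟨_, hp2⟩ | ⟨_, hp3⟩
    · rw [hp1]; norm_num
    · rw [hp2]
      nlinarith [Real.sq_sqrt (by norm_num : (2:ℝ) ≥ 0), Real.sqrt_nonneg 2]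
    · rw [hp3]
      nlinarith [Real.sq_sqrt (by norm_num : (17:ℝ) ≥ 0), Real.sqrt_nonneg 17]
  have hind : L^2 + ((d:ℝ) - 6)*L + 2*(d:ℝ) - 8 = 0 := by
    rw [hLdef]
    rcases hp with ⟨hd1, hp1⟩ | ⟨hd2, hp2⟩ | ⟨hd3, hp3⟩
    · subst hd1; rw [hp1]; push_cast; ring
    · subst hd2; rw [hp2]; push_cast
      linear_combination 4 * Real.sq_sqrt (by norm_num : (2:ℝ) ≥ 0)
    · subst hd3; rw [hp3]; push_cast
      linear_combination (1/4) * Real.sq_sqrt (by norm_num : (17:ℝ) ≥ 0)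
  -- functions
  set g : ℝ → ℝ := fun r => r^2 * u r - A with hgdef
  set g1 : ℝ → ℝ := fun r => 2*r*u r + r^2 * deriv u r with hg1def
  have hg : ∀ r : ℝ, 1 < r → HasDerivAt g (g1 r) r := by
    intro r hr
    have h1 : HasDerivAt (fun s : ℝ => s^2) (2*r) r := by
      simpa using hasDerivAt_pow 2 r
    have := (h1.mul (hdiff r hr).hasDerivAt).sub_const A
    simpa [hgdef, hg1def] using this
  have hg1 : ∀ r : ℝ, 1 < r →
      HasDerivAt g1 (2*u r + 4*r*deriv u r + r^2*deriv (deriv u) r) r := by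
    intro r hr
    have h2 : HasDerivAt (fun s : ℝ => s^2) (2*r) r := by
      simpa using hasDerivAt_pow 2 r
    have ha : HasDerivAt (fun s : ℝ => 2*s*u s) (2*u r + 2*r*deriv u r) r := by
      have h3 := ((hasDerivAt_id r).const_mul (2:ℝ)).mul (hdiff r hr).hasDerivAt
      simp only [id_eq] at h3
      exact h3.congr_deriv (by ring)
    have hb : HasDerivAt (fun s : ℝ => s^2*deriv u s)
        (2*r*deriv u r + r^2*deriv (deriv u) r) r := h2.mul (hdiff' r hr).hasDerivAt
    have h4 := ha.add hb
    exact h4.congr_deriv (by ring)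
  set v : ℝ → ℝ := fun r => r ^ L with hvdef
  set v1 : ℝ → ℝ := fun r => L * r ^ (L-1) with hv1def
  have hv : ∀ r : ℝ, 1 < r → HasDerivAt v (v1 r) r := by
    intro r hr
    exact Real.hasDerivAt_rpow_const (Or.inl (by positivity))
  have hv1 : ∀ r : ℝ, 1 < r → HasDerivAt v1 (L*(L-1)*r^(L-2)) r := by
    intro r hr
    have hne : r ≠ 0 := by positivity
    have h5 := (Real.hasDerivAt_rpow_const (p := L-1) (Or.inl hne)).const_mul L
    have e : L - 1 - 1 = L - 2 := by ring
    rw [e] at h5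
    exact h5.congr_deriv (by ring)
  set c0 : ℝ := g 2 / (2:ℝ)^L with hc0def
  have h2L : (0:ℝ) < (2:ℝ)^L := rpow_pos_of_pos (by norm_num) L
  have hg2 : 0 ≤ g 2 := by
    have := hlb 2 (by norm_num)
    simp only [hgdef]
    nlinarith
  have hc0 : 0 ≤ c0 := div_nonneg hg2 h2L.le
  set w : ℝ → ℝ := fun r => g r - c0 * v r with hwdef
  set w1 : ℝ → ℝ := fun r => g1 r - c0 * v1 r with hw1def
  clear_value A L g g1 v v1 c0 w w1
  have hw : ∀ r : ℝ, 1 < r → HasDerivAt w (w1 r) r := by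
    intro r hr
    rw [hwdef, hw1def]
    exact (hg r hr).sub ((hv r hr).const_mul c0)
  -- boundary value
  have hw2 : w 2 = 0 := by
    simp only [hwdef, hvdef, hc0def]
    field_simp
    ring
  -- limit
  have hwlim : Tendsto w atTop (𝓝 0) := by
    have h1 : Tendsto g atTop (𝓝 0) := by
      have := hlim.sub_const A
      simpa [hgdef, hAdef] using this
    have h2 : Tendsto v atTop (𝓝 0) := by
      have := tendsto_rpow_neg_atTop (y := -L) (by linarith)
      simpa [hvdef] using this
    have h3 := h1.sub (h2.const_mul c0)
    rw [hwdef]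
    simpa using h3
  -- continuity
  have hwcont : ContinuousOn w (Ici 2) := by
    intro r hr
    have hr1 : (1:ℝ) < r := by simp only [mem_Ici] at hr; linarith
    exact ((hw r hr1).differentiableAt.continuousAt).continuousWithinAt
  -- key: no positive local max
  have hkey : ∀ r > (2:ℝ), IsLocalMax w r → 0 < w r → False := by
    intro r hr2 hmax hwr
    have hr1 : (1:ℝ) < r := by linarith
    have hr0 : (0:ℝ) < r := by linarith
    have hrne : r ≠ 0 := ne_of_gt hr0
    have hderiv0 : w1 r = 0 := by
      have h0 := hmax.deriv_eq_zero
      rwa [(hw r hr1).deriv] at h0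
    set m : ℝ := (2*u r + 4*r*deriv u r + r^2*deriv (deriv u) r) - c0 * (L*(L-1)*r^(L-2))
      with hmdef
    have hdm : HasDerivAt w1 m r := by
      rw [hw1def, hmdef]
      exact (hg1 r hr1).sub ((hv1 r hr1).const_mul c0)
    have hY : r ^ (L-1) * r = r ^ L := by
      rw [← Real.rpow_add_one hrne (L-1)]
      norm_num
    have hZ : r ^ (L-2) * r^2 = r ^ L := by
      have h2 : r ^ (2:ℝ) = r^2 := by
        rw [show (2:ℝ) = ((2:ℕ):ℝ) by norm_num, Real.rpow_natCast]
      rw [← h2, ← Real.rpow_add hr0]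
      congr 1
      ring
    have hU2 : r * deriv (deriv u) r + ((d:ℝ)-1) * deriv u r = r * (u r)^2 := by
      have h := heq r hr1
      field_simp at h
      linear_combination h
    have hiden := aux_iden (d:ℝ) L A c0 r (u r) (deriv u r) (deriv (deriv u) r)
      (r^L) (r^(L-1)) (r^(L-2)) hY hZ hU2 hA8 hind
    have hiden' : m * r^2 = (8-2*(d:ℝ))*(w r) + (g r)^2 - ((d:ℝ)-5)*(r*(w1 r)) := by
      simp only [hmdef, hwdef, hw1def, hgdef, hg1def, hvdef, hv1def]
      linear_combination hiden
    have hr2' : (0:ℝ) < r^2 := by positivity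
    have hmr2 : 0 < m * r^2 := by
      rw [hiden', hderiv0]
      have h8 : 0 < 8 - 2*(d:ℝ) := by linarith [hdR.2]
      nlinarith [sq_nonneg (g r)]
    have hmpos : 0 < m := by nlinarith
    exact aux_no_max w w1 (Set.Ioi 1) isOpen_Ioi r hr1 (fun s hs => hw s hs) m hmpos hdm
      hderiv0 hmax
  have hneg : ∀ r ≥ (2:ℝ), w r ≤ 0 := aux_global w 2 hwcont (le_of_eq hw2) hwlim hkey
  -- conclude
  refine ⟨2, c0 / A, by norm_num, div_nonneg hc0 hA.le, ?_⟩
  intro r hr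
  have hr0 : (0:ℝ) < r := by linarith
  have hwr := hneg r hr
  simp only [hwdef, hgdef, hvdef] at hwr
  have hkey2 : u r ≤ (A + c0 * r^L)/r^2 := by
    rw [le_div_iff₀ (by positivity : (0:ℝ) < r^2)]
    nlinarith [hwr]
  have heq2 : A / r^2 * (1 + c0/A * r^L) = (A + c0 * r^L)/r^2 := by
    field_simp
  rw [heq2]
  exact hkey2
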